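/- arXiv:1109.6060 — 4 statements merged into one kernel-verified Lean document; each statement's English description precedes it below -/
import Mathlib

section
/- For every integer m ≥ 4, real numbers 0 < v_1 < v_2 < ⋯ < v_m, nonnegative real numbers A_1, …, A_m, and every h ∈ [1, m−3], the inequality Δ_h ≤ c_m* · v_h · A_h + Δ_{h+1} holds. -/
/-- `csum v i = ∑_{j=1}^{i-1} 2^{j-1} v_{i-j}` (empty sum is 0). -/
noncomputable def csum (v : ℕ → ℝ) (i : ℕ) : ℝ :=
  ∑ j ∈ Finset.Icc 1 (i - 1), (2 : ℝ) ^ (j - 1) * v (i - j)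


lemma sum_Icc_bot (f : ℕ → ℝ) {a b : ℕ} (hab : a ≤ b) :
    ∑ i ∈ Finset.Icc a b, f i = f a + ∑ i ∈ Finset.Icc (a + 1) b, f i := by
  have h1 : Finset.Icc a b = insert a (Finset.Icc (a + 1) b) := by
    ext x; simp only [Finset.mem_Icc, Finset.mem_insert]; omega
  rw [h1, Finset.sum_insert (by simp [Finset.mem_Icc])]

lemma csum_succ (v : ℕ → ℝ) (hv0 : v 0 = 0) (k : ℕ) :
    csum v (k + 1) = v k + 2 * csum v k := by
  rcases Nat.eq_zero_or_pos k with rfl | hk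
  · simp [csum, hv0]
  · obtain ⟨n, rfl⟩ : ∃ n, k = n + 1 := ⟨k - 1, by omega⟩
    unfold csum
    rw [← Finset.Ico_add_one_right_eq_Icc, ← Finset.Ico_add_one_right_eq_Icc,
      Finset.sum_Ico_eq_sum_range, Finset.sum_Ico_eq_sum_range]
    have e1 : n + 1 + 1 - 1 + 1 - 1 = n + 1 := by omega
    have e2 : n + 1 - 1 + 1 - 1 = n := by omega
    rw [e1, e2, Finset.sum_range_succ']
    rw [Finset.mul_sum]
    have hcong : ∀ i ∈ Finset.range n,
        (2:ℝ) ^ (1 + (i + 1) - 1) * v (n + 1 + 1 - (1 + (i + 1)))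
          = 2 * ((2:ℝ) ^ (1 + i - 1) * v (n + 1 - (1 + i))) := by
      intro i _
      have e3 : 1 + (i + 1) - 1 = i + 1 := by omega
      have e4 : n + 1 + 1 - (1 + (i + 1)) = n - i := by omega
      have e5 : 1 + i - 1 = i := by omega
      have e6 : n + 1 - (1 + i) = n - i := by omega
      rw [e3, e4, e5, e6, pow_succ]; ring
    rw [Finset.sum_congr rfl hcong, ← Finset.mul_sum]
    norm_num
    ring

/-- `cval v i = c_i = (v_i + csum v i) / (v_{i+1} + csum v i)`. -/
noncomputable def cval (v : ℕ → ℝ) (i : ℕ) : ℝ :=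
  (v i + csum v i) / (v (i + 1) + csum v i)

/-- `cstar v m = c_m^* = max_{1 ≤ i ≤ m-1} c_i`. -/
noncomputable def cstar (v : ℕ → ℝ) (m : ℕ) : ℝ :=
  if hne : (Finset.Icc 1 (m - 1)).Nonempty then (Finset.Icc 1 (m - 1)).sup' hne (cval v)
  else 0

/-- `Sfun A m h = S_h = ∑_{ℓ=h}^{m} A_ℓ`. -/
noncomputable def Sfun (A : ℕ → ℝ) (m h : ℕ) : ℝ := ∑ ℓ ∈ Finset.Icc h m, A ℓ

/-- `Urec A m h = U_h`, defined by `U_{m-1} = A_m` and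
`U_h = min (A_h) (U_{h+1}) + S_{h+1}` for `h ≤ m-2`. -/
noncomputable def Urec (A : ℕ → ℝ) (m h : ℕ) : ℝ :=
  if hle : m - 1 ≤ h then A m
  else min (A h) (Urec A m (h + 1)) + Sfun A m (h + 1)
termination_by m - 1 - h
decreasing_by omega


lemma Urec_nonneg (A : ℕ → ℝ) (m : ℕ) (hm : 1 ≤ m)
    (hA : ∀ i ∈ Finset.Icc 1 m, 0 ≤ A i) (h : ℕ) (hh : 1 ≤ h) : 0 ≤ Urec A m h := by
  rw [Urec]
  split_ifs with hle
  · exact hA m (Finset.mem_Icc.mpr ⟨hm, le_rfl⟩)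
  · have ih : 0 ≤ Urec A m (h + 1) := Urec_nonneg A m hm hA (h + 1) (by omega)
    have hS : 0 ≤ Sfun A m (h + 1) := by
      rw [Sfun]
      exact Finset.sum_nonneg fun i hi => hA i (by simp only [Finset.mem_Icc] at hi ⊢; omega)
    have hAh : 0 ≤ A h := hA h (by simp only [Finset.mem_Icc]; omega)
    have := le_min hAh ih
    linarith
termination_by m - 1 - h
decreasing_by omega

/-- `Delta v A m h = Δ_h`,
`Δ_h = [(v_h + ∑_{j=1}^{h-2} 2^{j-1} v_{h-1-j}) - c_m^* (v_{h-1} + ∑_{j=1}^{h-2} 2^{j-1} v_{h-1-j})] U_h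
     + [(v_{h-1} + ∑_{j=1}^{h-2} 2^{j-1} v_{h-1-j}) - c_m^* ∑_{j=1}^{h-2} 2^{j-1} v_{h-1-j}] S_h
     + ∑_{ℓ=h+1}^{m-1} (v_ℓ - v_{ℓ-1}) U_ℓ`, where `∑_{j=1}^{h-2} 2^{j-1} v_{h-1-j} = csum v (h-1)`. -/
noncomputable def Delta (v A : ℕ → ℝ) (m h : ℕ) : ℝ :=
  ((v h + csum v (h - 1)) - cstar v m * (v (h - 1) + csum v (h - 1))) * Urec A m h +
  ((v (h - 1) + csum v (h - 1)) - cstar v m * csum v (h - 1)) * Sfun A m h +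
  ∑ ℓ ∈ Finset.Icc (h + 1) (m - 1), (v ℓ - v (ℓ - 1)) * Urec A m ℓ

/-- Lemma 4.3: for every `m ≥ 4`, reals `0 < v 1 < ⋯ < v m` with `v 0 = 0`,
nonnegative reals `A_1, …, A_m`, and every `h ∈ [1, m-3]`,
`Δ_h ≤ c_m^* v_h A_h + Δ_{h+1}`. -/
theorem stmt3 (m : ℕ) (hm : 4 ≤ m) (v : ℕ → ℝ) (hv0 : v 0 = 0)
    (hv1 : 0 < v 1) (hv : ∀ i, 1 ≤ i → i < m → v i < v (i + 1))
    (A : ℕ → ℝ) (hA : ∀ i ∈ Finset.Icc 1 m, 0 ≤ A i)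
    (h : ℕ) (hh : h ∈ Finset.Icc 1 (m - 3)) :
    Delta v A m h ≤ cstar v m * v h * A h + Delta v A m (h + 1) := by
  simp only [Finset.mem_Icc] at hh
  obtain ⟨h1, h3⟩ := hh
  have vpos : ∀ i, 1 ≤ i → i ≤ m → 0 < v i := by
    intro i hi him
    induction i with
    | zero => omega
    | succ n ih =>
      rcases Nat.eq_zero_or_pos n with rfl | hn
      · exact hv1
      · exact lt_trans (ih hn (by omega)) (hv n hn (by omega))
  have vnonneg : ∀ i, i ≤ m → 0 ≤ v i := by
    intro i him
    rcases Nat.eq_zero_or_pos i with rfl | hi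
    · simp [hv0]
    · exact (vpos i hi him).le
  have csum_nonneg : ∀ i, i ≤ m → 0 ≤ csum v i := by
    intro i him
    apply Finset.sum_nonneg
    intro j hj
    simp only [Finset.mem_Icc] at hj
    have hvv := vnonneg (i - j) (by omega)
    positivity
  have hne : (Finset.Icc 1 (m - 1)).Nonempty := by rw [Finset.nonempty_Icc]; omega
  have hcstar : cstar v m = (Finset.Icc 1 (m - 1)).sup' hne (cval v) := by
    rw [cstar, dif_pos hne]
  set c := cstar v m with hc
  have hc1 : c ≤ 1 := by
    rw [hcstar]
    apply Finset.sup'_le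
    intro i hi
    simp only [Finset.mem_Icc] at hi
    have hd : 0 < v (i + 1) + csum v i :=
      add_pos_of_pos_of_nonneg (vpos (i + 1) (by omega) (by omega)) (csum_nonneg i (by omega))
    rw [cval, div_le_one hd]
    have := hv i hi.1 (by omega)
    linarith
  have hcv : ∀ i, 1 ≤ i → i ≤ m - 1 → cval v i ≤ c := by
    intro i hi1 hi2
    rw [hcstar]
    exact Finset.le_sup' _ (by simp only [Finset.mem_Icc]; omega)
  have hc0 : 0 ≤ c := by
    have h2 := hcv 1 le_rfl (by omega)
    have hcv1 : 0 ≤ cval v 1 := by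
      rw [cval]
      have hd : 0 ≤ v 2 + csum v 1 := add_nonneg (vnonneg 2 (by omega)) (csum_nonneg 1 (by omega))
      have hn : 0 ≤ v 1 + csum v 1 := add_nonneg hv1.le (csum_nonneg 1 (by omega))
      exact div_nonneg hn hd
    linarith
  have hcs0 : csum v 0 = 0 := by simp [csum]
  have hP : 0 ≤ c * (v h + csum v (h - 1)) - (v (h - 1) + csum v (h - 1)) := by
    rcases Nat.eq_or_lt_of_le h1 with h1e | h2le
    · have hh0 : h - 1 = 0 := by omega
      rw [hh0, hcs0, hv0]
      have := vpos h h1 (by omega)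
      nlinarith
    · have hle := hcv (h - 1) (by omega) (by omega)
      rw [cval] at hle
      have he : h - 1 + 1 = h := by omega
      rw [he] at hle
      have hd : 0 < v h + csum v (h - 1) :=
        add_pos_of_pos_of_nonneg (vpos h h1 (by omega)) (csum_nonneg (h - 1) (by omega))
      rw [div_le_iff₀ hd] at hle
      linarith
  have habw : 0 ≤ v h + v (h - 1) + 2 * csum v (h - 1) := by
    have := vnonneg h (by omega)
    have := vnonneg (h - 1) (by omega)
    have := csum_nonneg (h - 1) (by omega)
    linarith
  have hQ : 0 ≤ (1 - c) * (v h + v (h - 1) + 2 * csum v (h - 1)) :=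
    mul_nonneg (by linarith) habw
  have hU1 : 0 ≤ Urec A m (h + 1) := Urec_nonneg A m (by omega) hA (h + 1) (by omega)
  have hW : csum v h = v (h - 1) + 2 * csum v (h - 1) := by
    have := csum_succ v hv0 (h - 1)
    rwa [Nat.sub_add_cancel h1] at this
  have hUh : Urec A m h = min (A h) (Urec A m (h + 1)) + Sfun A m (h + 1) := by
    rw [Urec, dif_neg (by omega)]
  have hSh : Sfun A m h = A h + Sfun A m (h + 1) := by
    rw [Sfun, Sfun]
    exact sum_Icc_bot A (by omega)
  have hT : (∑ ℓ ∈ Finset.Icc (h + 1) (m - 1), (v ℓ - v (ℓ - 1)) * Urec A m ℓ)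
      = (v (h + 1) - v (h + 1 - 1)) * Urec A m (h + 1)
        + ∑ ℓ ∈ Finset.Icc (h + 1 + 1) (m - 1), (v ℓ - v (ℓ - 1)) * Urec A m ℓ :=
    sum_Icc_bot _ (by omega)
  simp only [Nat.add_sub_cancel] at hT
  simp only [Delta, Nat.add_sub_cancel, ← hc]
  rw [hW, hUh, hSh, hT]
  have k1 : (c * (v h + csum v (h - 1)) - (v (h - 1) + csum v (h - 1)))
        * min (A h) (Urec A m (h + 1))
      ≤ (c * (v h + csum v (h - 1)) - (v (h - 1) + csum v (h - 1))) * A h :=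
    mul_le_mul_of_nonneg_left (min_le_left _ _) hP
  have k2 : ((1 - c) * (v h + v (h - 1) + 2 * csum v (h - 1)))
        * min (A h) (Urec A m (h + 1))
      ≤ ((1 - c) * (v h + v (h - 1) + 2 * csum v (h - 1))) * Urec A m (h + 1) :=
    mul_le_mul_of_nonneg_left (min_le_right _ _) hQ
  nlinarith [k1, k2]
end

section
/- Let m ≥ 3 be an integer, let A_1, …, A_m be nonnegative real numbers, and let D_1, …, D_{m−1} be real numbers such that D_ℓ ≤ S_{ℓ+1} for every ℓ ∈ [1, m−1] and Σ_{ℓ=h}^{m−1} D_ℓ ≤ S_h for every h ∈ [1, m−1]. Then for every h ∈ [1, m−1], the partial sum satisfies Σ_{ℓ=h}^{m−1} D_ℓ ≤ U_h. -/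
/-- `Ufun A m h = U_h`: for `h = m-1` it is `A_m`; otherwise it is the minimum of the
quantities (i) `S_{h+1} + ⋯ + S_{j+1} + S_{j+1}` for `j ∈ [h, m-3]` (with `S_{j+1}`
counted twice), (ii) `S_{h+1} + S_{h+2} + ⋯ + S_m`, and (iii) `S_h`. -/
noncomputable def Ufun (A : ℕ → ℝ) (m h : ℕ) : ℝ :=
  if h = m - 1 then A m
  else
    Finset.fold min
      (min (∑ ℓ ∈ Finset.Icc (h + 1) m, Sfun A m ℓ) (Sfun A m h))
      (fun j => (∑ ℓ ∈ Finset.Icc (h + 1) (j + 1), Sfun A m ℓ) + Sfun A m (j + 1))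
      (Finset.Icc h (m - 3))

/-- Let `m ≥ 3`, let `A_1, …, A_m` be nonnegative reals, and let `D_1, …, D_{m-1}` be
reals with `D_ℓ ≤ S_{ℓ+1}` for every `ℓ ∈ [1, m-1]` and `∑_{ℓ=h}^{m-1} D_ℓ ≤ S_h` for
every `h ∈ [1, m-1]`. Then `∑_{ℓ=h}^{m-1} D_ℓ ≤ U_h` for every `h ∈ [1, m-1]`. -/
theorem stmt5 (m : ℕ) (hm : 3 ≤ m) (A : ℕ → ℝ)
    (hA : ∀ i ∈ Finset.Icc 1 m, 0 ≤ A i) (D : ℕ → ℝ)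
    (hD1 : ∀ ℓ ∈ Finset.Icc 1 (m - 1), D ℓ ≤ Sfun A m (ℓ + 1))
    (hD2 : ∀ h ∈ Finset.Icc 1 (m - 1), ∑ ℓ ∈ Finset.Icc h (m - 1), D ℓ ≤ Sfun A m h) :
    ∀ h ∈ Finset.Icc 1 (m - 1), ∑ ℓ ∈ Finset.Icc h (m - 1), D ℓ ≤ Ufun A m h := by
  intro h hh
  rw [Finset.mem_Icc] at hh
  obtain ⟨hh1, hh2⟩ := hh
  -- key reindexing/bounding lemma
  have key : ∀ a b : ℕ, 1 ≤ a → b ≤ m - 1 →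
      ∑ ℓ ∈ Finset.Icc a b, D ℓ ≤ ∑ ℓ ∈ Finset.Icc (a + 1) (b + 1), Sfun A m ℓ := by
    intro a b ha hb
    have hre : ∑ ℓ ∈ Finset.Icc (a + 1) (b + 1), Sfun A m ℓ
        = ∑ ℓ ∈ Finset.Icc a b, Sfun A m (ℓ + 1) := by
      rw [← Finset.map_add_right_Icc a b 1, Finset.sum_map]
      rfl
    rw [hre]
    apply Finset.sum_le_sum
    intro i hi
    rw [Finset.mem_Icc] at hi
    exact hD1 i (Finset.mem_Icc.mpr ⟨le_trans ha hi.1, le_trans hi.2 hb⟩)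
  by_cases hcase : h = m - 1
  · subst hcase
    rw [Ufun, if_pos rfl, Finset.Icc_self, Finset.sum_singleton]
    have h1 := hD1 (m - 1) (Finset.mem_Icc.mpr ⟨by omega, le_refl _⟩)
    have heq : Sfun A m (m - 1 + 1) = A m := by
      have : m - 1 + 1 = m := by omega
      rw [this, Sfun, Finset.Icc_self, Finset.sum_singleton]
    linarith
  · rw [Ufun, if_neg hcase, Finset.le_fold_min]
    refine ⟨le_min ?_ ?_, ?_⟩
    · have := key h (m - 1) hh1 (le_refl _)
      have hm1 : m - 1 + 1 = m := by omega
      rwa [hm1] at this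
    · exact hD2 h (Finset.mem_Icc.mpr ⟨hh1, hh2⟩)
    · intro j hj
      rw [Finset.mem_Icc] at hj
      have hsplit : ∑ ℓ ∈ Finset.Icc h (m - 1), D ℓ
          = ∑ ℓ ∈ Finset.Icc h j, D ℓ + ∑ ℓ ∈ Finset.Icc (j + 1) (m - 1), D ℓ := by
        rw [← Finset.Ico_add_one_right_eq_Icc, ← Finset.Ico_add_one_right_eq_Icc, ← Finset.Ico_add_one_right_eq_Icc,
          Finset.sum_Ico_consecutive]
        · omega
        · omega
      have h1 := key h j hh1 (by omega)
      have h2 := hD2 (j + 1) (Finset.mem_Icc.mpr ⟨by omega, by omega⟩)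
      rw [hsplit]
      exact add_le_add h1 h2
end

section
/- For every integer m ≥ 4, real numbers 0 < v_1 < v_2 < ⋯ < v_m, and nonnegative real numbers A_1, …, A_m, the inequality Δ_1 ≤ c_m* · (v_1 A_1 + v_2 A_2 + ⋯ + v_m A_m) holds. -/
lemma Icc_split (f : ℕ → ℝ) (h m : ℕ) (hhm : h ≤ m) :
    ∑ x ∈ Finset.Icc h m, f x = f h + ∑ x ∈ Finset.Icc (h+1) m, f x := by
  have : Finset.Icc h m = insert h (Finset.Icc (h+1) m) := by
    ext x; simp only [Finset.mem_Icc, Finset.mem_insert]; omega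
  rw [this, Finset.sum_insert (by simp)]

lemma csum_rec0 (v : ℕ → ℝ) (h : ℕ) (h1 : 1 ≤ h) :
    csum v (h + 1) = v h + 2 * csum v h := by
  show ∑ j ∈ Finset.Icc 1 (h + 1 - 1), (2:ℝ) ^ (j-1) * v (h+1-j) = _
  rw [Nat.add_sub_cancel, Icc_split _ 1 h h1]
  have hmap : Finset.Icc 2 h = (Finset.Icc 1 (h-1)).map (addRightEmbedding 1) := by
    rw [Finset.map_add_right_Icc]; congr 1; omega
  rw [hmap, Finset.sum_map]
  simp only [addRightEmbedding_apply]
  have : ∀ j ∈ Finset.Icc 1 (h-1), (2:ℝ) ^ (j+1-1) * v (h+1-(j+1))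
      = 2 * ((2:ℝ) ^ (j-1) * v (h-j)) := by
    intro j hj
    simp only [Finset.mem_Icc] at hj
    rw [show j+1-1 = (j-1)+1 by omega, show h+1-(j+1) = h-j by omega, pow_succ]
    ring
  rw [Finset.sum_congr rfl this, ← Finset.mul_sum]
  simp [csum]

/-- csum v h = v (h-1) + 2 * csum v (h-1) for 1 ≤ h, given v 0 = 0. -/
lemma csum_rec (v : ℕ → ℝ) (hv0 : v 0 = 0) (h : ℕ) (h1 : 1 ≤ h) :
    csum v h = v (h - 1) + 2 * csum v (h - 1) := by
  rcases Nat.exists_eq_add_of_le h1 with ⟨k, rfl⟩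
  rw [show 1 + k = k + 1 by omega, Nat.add_sub_cancel]
  rcases Nat.eq_zero_or_pos k with rfl | hk
  · simp [csum, hv0]
  · exact csum_rec0 v k hk

lemma csum_nonneg (v : ℕ → ℝ) (i : ℕ) (hv : ∀ k, k < i → 0 ≤ v k) : 0 ≤ csum v i := by
  apply Finset.sum_nonneg
  intro j hj
  simp only [Finset.mem_Icc] at hj
  exact mul_nonneg (by positivity) (hv _ (by omega))

lemma Urec_top (A : ℕ → ℝ) (m h : ℕ) (hle : m - 1 ≤ h) : Urec A m h = A m := by
  rw [Urec]; simp [hle]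

lemma Urec_step (A : ℕ → ℝ) (m h : ℕ) (hle : h < m - 1) :
    Urec A m h = min (A h) (Urec A m (h + 1)) + Sfun A m (h + 1) := by
  rw [Urec]; simp [Nat.not_le.mpr hle, not_le_of_gt hle]

section Main

variable (m : ℕ) (v A : ℕ → ℝ)

lemma vpos (hm : 4 ≤ m) (hv1 : 0 < v 1) (hv : ∀ i, 1 ≤ i → i < m → v i < v (i + 1)) :
    ∀ i, 1 ≤ i → i ≤ m → 0 < v i := by
  intro i h1 h2
  induction i with
  | zero => omega
  | succ n ih =>
    rcases Nat.eq_zero_or_pos n with rfl | hn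
    · exact hv1
    · exact lt_trans (ih hn (by omega)) (hv n hn (by omega))

lemma vnn (hm : 4 ≤ m) (hv0 : v 0 = 0) (hv1 : 0 < v 1)
    (hv : ∀ i, 1 ≤ i → i < m → v i < v (i + 1)) :
    ∀ i, i ≤ m → 0 ≤ v i := by
  intro i h2
  rcases Nat.eq_zero_or_pos i with rfl | hi
  · exact le_of_eq hv0.symm
  · exact le_of_lt (vpos m v hm hv1 hv i hi h2)

lemma csum_nn (hm : 4 ≤ m) (hv0 : v 0 = 0) (hv1 : 0 < v 1)
    (hv : ∀ i, 1 ≤ i → i < m → v i < v (i + 1)) :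
    ∀ i, i ≤ m → 0 ≤ csum v i := by
  intro i h2
  exact csum_nonneg v i (fun k hk => vnn m v hm hv0 hv1 hv k (by omega))

lemma cstar_eq (hm : 4 ≤ m) :
    cstar v m = (Finset.Icc 1 (m-1)).sup' ⟨1, by simp; omega⟩ (cval v) := by
  rw [cstar, dif_pos]; exact ⟨1, by simp; omega⟩

lemma cval_bounds (hm : 4 ≤ m) (hv0 : v 0 = 0) (hv1 : 0 < v 1)
    (hv : ∀ i, 1 ≤ i → i < m → v i < v (i + 1)) :
    ∀ i, 1 ≤ i → i ≤ m - 1 → 0 < cval v i ∧ cval v i < 1 := by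
  intro i h1 h2
  have hP : 0 ≤ csum v i := csum_nn m v hm hv0 hv1 hv i (by omega)
  have hvi : 0 < v i := vpos m v hm hv1 hv i h1 (by omega)
  have hlt : v i < v (i+1) := hv i h1 (by omega)
  have hD : 0 < v (i+1) + csum v i := by linarith
  constructor
  · exact div_pos (by linarith) hD
  · rw [cval, div_lt_one hD]; linarith

lemma cstar_pos (hm : 4 ≤ m) (hv0 : v 0 = 0) (hv1 : 0 < v 1)
    (hv : ∀ i, 1 ≤ i → i < m → v i < v (i + 1)) : 0 < cstar v m := by
  rw [cstar_eq m v hm]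
  refine lt_of_lt_of_le (b := cval v 1) ?_ (Finset.le_sup' _ (by simp; omega))
  exact (cval_bounds m v hm hv0 hv1 hv 1 le_rfl (by omega)).1

lemma cstar_lt_one (hm : 4 ≤ m) (hv0 : v 0 = 0) (hv1 : 0 < v 1)
    (hv : ∀ i, 1 ≤ i → i < m → v i < v (i + 1)) : cstar v m < 1 := by
  rw [cstar_eq m v hm]
  refine (Finset.sup'_lt_iff _).2 ?_
  intro i hi
  simp only [Finset.mem_Icc] at hi
  exact (cval_bounds m v hm hv0 hv1 hv i hi.1 hi.2).2

lemma keyineq (hm : 4 ≤ m) (hv0 : v 0 = 0) (hv1 : 0 < v 1)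
    (hv : ∀ i, 1 ≤ i → i < m → v i < v (i + 1)) :
    ∀ i, 1 ≤ i → i ≤ m - 1 →
      v i + csum v i ≤ cstar v m * (v (i+1) + csum v i) := by
  intro i h1 h2
  have hP : 0 ≤ csum v i := csum_nn m v hm hv0 hv1 hv i (by omega)
  have hvi : 0 < v i := vpos m v hm hv1 hv i h1 (by omega)
  have hlt : v i < v (i+1) := hv i h1 (by omega)
  have hD : 0 < v (i+1) + csum v i := by linarith
  have hle : cval v i ≤ cstar v m := by
    rw [cstar_eq m v hm]
    exact Finset.le_sup' _ (by simp; omega)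
  have := (div_le_iff₀ hD).mp hle
  calc v i + csum v i = cval v i * (v (i+1) + csum v i) := by
        rw [cval, div_mul_cancel₀]; exact ne_of_gt hD
    _ ≤ cstar v m * (v (i+1) + csum v i) := by
        exact mul_le_mul_of_nonneg_right hle (le_of_lt hD)

lemma Sfun_nn (hA : ∀ i ∈ Finset.Icc 1 m, 0 ≤ A i) :
    ∀ h, 1 ≤ h → 0 ≤ Sfun A m h := by
  intro h h1
  apply Finset.sum_nonneg
  intro i hi
  simp only [Finset.mem_Icc] at hi
  exact hA i (by simp; omega)

lemma Urec_nn (hm : 4 ≤ m) (hA : ∀ i ∈ Finset.Icc 1 m, 0 ≤ A i) :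
    ∀ h, 1 ≤ h → 0 ≤ Urec A m h := by
  intro h h1
  by_cases hle : m - 1 ≤ h
  · rw [Urec_top A m h hle]; exact hA m (by simp; omega)
  · push_neg at hle
    rw [Urec_step A m h hle]
    have h2 := Urec_nn hm hA (h+1) (by omega)
    have h3 := Sfun_nn m A hA (h+1) (by omega)
    have h4 : 0 ≤ A h := hA h (by simp; omega)
    have : 0 ≤ min (A h) (Urec A m (h+1)) := le_min h4 h2
    linarith
termination_by h => m - 1 - h
decreasing_by omega

end Main

lemma Sfun_split (A : ℕ → ℝ) (m h : ℕ) (hhm : h ≤ m) :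
    Sfun A m h = A h + Sfun A m (h+1) := by
  rw [Sfun, Sfun, Icc_split A h m hhm]

theorem key (m : ℕ) (hm : 4 ≤ m) (v : ℕ → ℝ) (hv0 : v 0 = 0) (hv1 : 0 < v 1)
    (hv : ∀ i, 1 ≤ i → i < m → v i < v (i + 1)) (A : ℕ → ℝ)
    (hA : ∀ i ∈ Finset.Icc 1 m, 0 ≤ A i) (h : ℕ) (h1 : 1 ≤ h) (h2 : h ≤ m - 1) :
    Delta v A m h ≤ cstar v m * ∑ ℓ ∈ Finset.Icc h m, v ℓ * A ℓ := by
  have hc0 : 0 < cstar v m := cstar_pos m v hm hv0 hv1 hv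
  have hc1 : cstar v m < 1 := cstar_lt_one m v hm hv0 hv1 hv
  by_cases hbase : m - 1 ≤ h
  · -- base case: h = m - 1
    have hh : h = m - 1 := by omega
    subst hh
    obtain ⟨k, rfl⟩ : ∃ k, m = k + 4 := ⟨m - 4, by omega⟩
    rw [show k + 4 - 1 = k + 3 from rfl] at *
    rw [Delta, show k + 3 - 1 = k + 2 from rfl, show k + 3 + 1 = k + 4 from rfl, show k + 4 - 1 = k + 3 from rfl]
    rw [(Finset.Icc_eq_empty (by omega) : Finset.Icc (k+4) (k+3) = ∅), Finset.sum_empty]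
    rw [Urec_top A (k+4) (k+3) (by omega), Sfun_split A (k+4) (k+3) (by omega)]
    rw [show k + 3 + 1 = k + 4 from rfl]
    rw [(by rw [Sfun, Finset.Icc_self, Finset.sum_singleton] : Sfun A (k+4) (k+4) = A (k+4))]
    rw [Icc_split (fun l => v l * A l) (k+3) (k+4) (by omega)]
    rw [show k + 3 + 1 = k + 4 from rfl, Finset.Icc_self, Finset.sum_singleton]
    have hQ : csum v (k+3) = v (k+2) + 2 * csum v (k+2) :=
      csum_rec v hv0 (k+3) (by omega)
    have K1 := keyineq (k+4) v hm hv0 hv1 hv (k+2) (by omega) (by omega)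
    have K2 := keyineq (k+4) v hm hv0 hv1 hv (k+3) (by omega) (by omega)
    rw [hQ] at K2
    have hA3 : 0 ≤ A (k+3) := hA _ (by simp)
    have hA4 : 0 ≤ A (k+4) := hA _ (by simp)
    have E1 := mul_le_mul_of_nonneg_right K1 hA3
    have E2 := mul_le_mul_of_nonneg_right K2 hA4
    nlinarith [E1, E2]
  · -- step case
    push_neg at hbase
    have IH := key m hm v hv0 hv1 hv A hA (h+1) (by omega) (by omega)
    obtain ⟨p, rfl⟩ : ∃ p, h = p + 1 := ⟨h - 1, by omega⟩
    have hQ : csum v (p+1) = v p + 2 * csum v p := by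
      have := csum_rec v hv0 (p+1) (by omega)
      rwa [Nat.add_sub_cancel] at this
    have hPnn : 0 ≤ csum v p := csum_nn m v hm hv0 hv1 hv p (by omega)
    have hApnn : 0 ≤ A (p+1) := hA _ (by simp; omega)
    have hU'nn : 0 ≤ Urec A m (p+2) := Urec_nn m A hm hA (p+2) (by omega)
    have hvp1 : 0 < v (p+1) := vpos m v hm hv1 hv (p+1) (by omega) (by omega)
    have hvpnn : 0 ≤ v p := vnn m v hm hv0 hv1 hv p (by omega)
    have hbca : v p + csum v p ≤ cstar v m * (v (p+1) + csum v p) := by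
      rcases Nat.eq_zero_or_pos p with rfl | hp
      · rw [hv0, (by simp [csum] : csum v 0 = 0)]
        nlinarith
      · exact keyineq m v hm hv0 hv1 hv p hp (by omega)
    simp only [Delta] at IH ⊢
    simp only [show p+1+1 = p+2 from rfl, show p+1-1 = p from rfl,
      show p+2-1 = p+1 from rfl] at IH ⊢
    rw [hQ] at IH
    rw [Urec_step A m (p+1) (by omega), Sfun_split A m (p+1) (by omega),
      Icc_split (fun l => (v l - v (l-1)) * Urec A m l) (p+2) (m-1) (by omega),
      Icc_split (fun l => v l * A l) (p+1) m (by omega)]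
    simp only [show p+1+1 = p+2 from rfl, show p+2+1 = p+3 from rfl,
      show p+2-1 = p+1 from rfl] at IH ⊢
    rcases le_total (A (p+1)) (Urec A m (p+2)) with hmin | hmin
    · rw [min_eq_left hmin]
      have key1 : 0 ≤ ((1 - cstar v m) * (v (p+1) + (v p + 2 * csum v p))) *
          (Urec A m (p+2) - A (p+1)) :=
        mul_nonneg (mul_nonneg (by linarith) (by linarith)) (by linarith)
      nlinarith [IH, key1]
    · rw [min_eq_right hmin]
      have key2 : 0 ≤ (cstar v m * (v (p+1) + csum v p) - (v p + csum v p)) *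
          (A (p+1) - Urec A m (p+2)) :=
        mul_nonneg (by linarith) (by linarith)
      nlinarith [IH, key2]
termination_by m - 1 - h
decreasing_by omega

/-- For every `m ≥ 4`, reals `0 < v 1 < ⋯ < v m` with `v 0 = 0`, and nonnegative reals
`A_1, …, A_m`, `Δ_1 ≤ c_m^* (v_1 A_1 + v_2 A_2 + ⋯ + v_m A_m)`. -/
theorem stmt7 (m : ℕ) (hm : 4 ≤ m) (v : ℕ → ℝ) (hv0 : v 0 = 0)
    (hv1 : 0 < v 1) (hv : ∀ i, 1 ≤ i → i < m → v i < v (i + 1))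
    (A : ℕ → ℝ) (hA : ∀ i ∈ Finset.Icc 1 m, 0 ≤ A i) :
    Delta v A m 1 ≤ cstar v m * ∑ h ∈ Finset.Icc 1 m, v h * A h := by
  exact key m hm v hv0 hv1 hv A hA 1 le_rfl (by omega)
end

section
/- For every integer m ≥ 2 and real numbers 0 < v_1 < v_2 < ⋯ < v_m, the inequality c_{m−1} > (v_1 + v_2 + ⋯ + v_{m−1}) / (v_1 + v_2 + ⋯ + v_m) holds; consequently 1 + c_m* ≥ 1 + c_{m−1} > 2 − v_m/(v_1 + v_2 + ⋯ + v_m). -/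
/-- For every `m ≥ 2` and reals `0 < v 1 < ⋯ < v m`, one has
`c_{m-1} > (v_1 + ⋯ + v_{m-1}) / (v_1 + ⋯ + v_m)`; consequently
`1 + c_m^* ≥ 1 + c_{m-1} > 2 - v_m / (v_1 + ⋯ + v_m)`. -/
theorem stmt10 (m : ℕ) (hm : 2 ≤ m) (v : ℕ → ℝ)
    (hv1 : 0 < v 1) (hv : ∀ i, 1 ≤ i → i < m → v i < v (i + 1)) :
    cval v (m - 1) > (∑ i ∈ Finset.Icc 1 (m - 1), v i) / (∑ i ∈ Finset.Icc 1 m, v i) ∧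
    1 + cstar v m ≥ 1 + cval v (m - 1) ∧
    1 + cval v (m - 1) > 2 - v m / (∑ i ∈ Finset.Icc 1 m, v i) := by
  have hpos : ∀ i, 1 ≤ i → i ≤ m → 0 < v i := by
    intro i h1 h2
    induction i with
    | zero => omega
    | succ k ih =>
      rcases Nat.lt_or_ge 1 (k + 1) with h | h
      · have hk : 1 ≤ k := by omega
        exact lt_trans (ih hk (by omega)) (hv k hk (by omega))
      · have : k = 0 := by omega
        subst this; exact hv1
  set S := csum v (m - 1) with hSdef
  set A := ∑ i ∈ Finset.Icc 1 (m - 1), v i with hAdef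
  set B := ∑ i ∈ Finset.Icc 1 m, v i with hBdef
  have hS0 : 0 ≤ S := by
    rw [hSdef, csum]
    apply Finset.sum_nonneg
    intro j hj
    simp only [Finset.mem_Icc] at hj
    have := hpos (m - 1 - j) (by omega) (by omega)
    positivity
  have hre : ∑ j ∈ Finset.Icc 1 (m - 1 - 1), v (m - 1 - j)
      = ∑ i ∈ Finset.Icc 1 (m - 1 - 1), v i := by
    apply Finset.sum_nbij' (fun j => m - 1 - j) (fun i => m - 1 - i) <;>
      (intro a ha; simp only [Finset.mem_Icc] at *) <;> omega
  have hSge : ∑ i ∈ Finset.Icc 1 (m - 1 - 1), v i ≤ S := by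
    rw [hSdef, csum, ← hre]
    apply Finset.sum_le_sum
    intro j hj
    simp only [Finset.mem_Icc] at hj
    have hvp := hpos (m - 1 - j) (by omega) (by omega)
    have h2 : (1 : ℝ) ≤ 2 ^ (j - 1) := one_le_pow₀ (by norm_num)
    nlinarith
  have hAsplit : A = (∑ i ∈ Finset.Icc 1 (m - 1 - 1), v i) + v (m - 1) := by
    rw [hAdef]
    have : m - 1 = (m - 1 - 1) + 1 := by omega
    rw [this, Finset.sum_Icc_succ_top (by omega)]
    simp
  have hBsplit : B = A + v m := by
    rw [hBdef, hAdef]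
    have : m = (m - 1) + 1 := by omega
    rw [this, Finset.sum_Icc_succ_top (by omega)]
    simp
  have hA0 : 0 < A := by
    rw [hAdef]
    apply Finset.sum_pos
    · intro i hi
      simp only [Finset.mem_Icc] at hi
      exact hpos i hi.1 (by omega)
    · exact ⟨1, by simp only [Finset.mem_Icc]; omega⟩
  have hvm : 0 < v m := hpos m (by omega) le_rfl
  have hvm1 : 0 < v (m - 1) := hpos (m - 1) (by omega) (by omega)
  have hTA : A ≤ v (m - 1) + S := by linarith
  have heq : m - 1 + 1 = m := by omega
  have hden : 0 < v m + S := by linarith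
  have hB0 : 0 < B := by linarith [hBsplit]
  have h1 : cval v (m - 1) > A / B := by
    rw [cval, ← hSdef, heq, gt_iff_lt, div_lt_div_iff₀ hB0 hden]
    nlinarith [mul_le_mul_of_nonneg_right hTA hvm.le, mul_pos hvm1 hA0, hBsplit]
  refine ⟨h1, ?_, ?_⟩
  · have hne : (Finset.Icc 1 (m - 1)).Nonempty := ⟨1, by simp only [Finset.mem_Icc]; omega⟩
    rw [cstar, dif_pos hne]
    have := Finset.le_sup' (cval v) (show m - 1 ∈ Finset.Icc 1 (m - 1) by
      simp only [Finset.mem_Icc]; omega)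
    linarith
  · have : A / B = 1 - v m / B := by
      rw [hBsplit]
      field_simp
      ring
    linarith [h1, this]
end
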